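/- Let A = (α, μ, β) be a P-finite automaton of dimension n over Σ and let W ⊆ Σ* be a finite set of words with ε ∈ W. Suppose that for every σ ∈ Σ and u ∈ W, B_A(σu) lies in the ℚ(x)-linear span of {B_A(u') : u' ∈ W} (inside ℚ(x)^n, viewing ℚ[x]^n ⊆ ℚ(x)^n). Then for every word w ∈ Σ*, B_A(w) lies in the ℚ(x)-linear span of {B_A(u) : u ∈ W}. -/

import Mathlib

open Polynomial Matrix

/-- Substitute `x + k` for `x` in a polynomial. -/
noncomputable def shiftP (k : ℕ) (p : Polynomial ℚ) : Polynomial ℚ :=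
  p.comp (Polynomial.X + Polynomial.C (k : ℚ))

/-- The extension of the transition map `μ` of a P-finite automaton to words:
`μ(σ₁⋯σₖ)(x) = μ(σ₁)(x)·μ(σ₂)(x+1)⋯μ(σₖ)(x+k-1)`, so that
`μ(ε)(x) = I` and `μ(wσ)(x) = μ(w)(x)·μ(σ)(x+|w|)`. -/
noncomputable def muWord {S ι : Type*} [Fintype ι] [DecidableEq ι]
    (μ : S → Matrix ι ι (Polynomial ℚ)) (w : List S) : Matrix ι ι (Polynomial ℚ) :=
  (w.zipIdx.map (fun p => (μ p.1).map (shiftP p.2))).prod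

/-- The function computed by the P-finite automaton `(α, μ, β)`:
`f_A(w) = α·μ(w,1)·β(|w|+1)`. -/
noncomputable def fAut {S ι : Type*} [Fintype ι] [DecidableEq ι]
    (α : ι → ℚ) (μ : S → Matrix ι ι (Polynomial ℚ)) (β : ι → Polynomial ℚ)
    (w : List S) : ℚ :=
  α ⬝ᵥ ((muWord μ w).map (Polynomial.eval (1 : ℚ))).mulVec
      (fun i => (β i).eval ((w.length : ℚ) + 1))

/-- The backward function of a P-finite automaton: `B_A(u)(x) = μ(u)(x)·β(x+|u|)`. -/
noncomputable def backF {S ι : Type*} [Fintype ι] [DecidableEq ι]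
    (μ : S → Matrix ι ι (Polynomial ℚ)) (β : ι → Polynomial ℚ)
    (w : List S) : ι → Polynomial ℚ :=
  (muWord μ w).mulVec (fun i => shiftP w.length (β i))


/-- The embedding of `ℚ[x]^n` into `ℚ(x)^n`. -/
noncomputable def embRat {n : ℕ} (v : Fin n → Polynomial ℚ) : Fin n → RatFunc ℚ :=
  fun i => algebraMap (Polynomial ℚ) (RatFunc ℚ) (v i)

/-- `shiftP 1` as a ring hom. -/
noncomputable def sRH : Polynomial ℚ →+* Polynomial ℚ :=
  Polynomial.eval₂RingHom Polynomial.C (Polynomial.X + Polynomial.C (1 : ℚ))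

lemma sRH_apply (p : Polynomial ℚ) : sRH p = shiftP 1 p := by
  simp [sRH, shiftP, Polynomial.comp]

lemma sRH_injective : Function.Injective sRH := by
  intro p q h
  have h2 := congrArg (fun r => r.comp (X - C (1:ℚ))) h
  simp only [sRH_apply, shiftP] at h2
  rw [Polynomial.comp_assoc, Polynomial.comp_assoc] at h2
  simpa [Polynomial.add_comp, Polynomial.X_comp, Polynomial.C_comp] using h2

lemma shiftP_shiftP (k : ℕ) (p : Polynomial ℚ) :
    shiftP 1 (shiftP k p) = shiftP (k + 1) p := by
  simp only [shiftP, Polynomial.comp_assoc]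
  congr 1
  push_cast
  simp [Polynomial.add_comp, Polynomial.X_comp, Polynomial.C_comp]
  ring

lemma shiftP_zero (p : Polynomial ℚ) : shiftP 0 p = p := by
  simp [shiftP]

noncomputable def muFrom {S ι : Type*} [Fintype ι] [DecidableEq ι]
    (μ : S → Matrix ι ι (Polynomial ℚ)) (k : ℕ) (w : List S) : Matrix ι ι (Polynomial ℚ) :=
  ((List.zipIdx w k).map (fun p => (μ p.1).map (shiftP p.2))).prod

lemma muWord_eq_muFrom {S ι : Type*} [Fintype ι] [DecidableEq ι]
    (μ : S → Matrix ι ι (Polynomial ℚ)) (w : List S) : muWord μ w = muFrom μ 0 w := rfl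

lemma map_sRH_eq {ι : Type*} [Fintype ι] [DecidableEq ι] (M : Matrix ι ι (Polynomial ℚ)) :
    M.map (shiftP 1) = sRH.mapMatrix M := by
  ext i j; simp [RingHom.mapMatrix_apply, sRH_apply, Matrix.map_apply]

lemma muFrom_succ {S ι : Type*} [Fintype ι] [DecidableEq ι]
    (μ : S → Matrix ι ι (Polynomial ℚ)) (k : ℕ) (w : List S) :
    muFrom μ (k + 1) w = (muFrom μ k w).map (shiftP 1) := by
  induction w generalizing k with
  | nil => simp [muFrom, map_sRH_eq]
  | cons a w ih =>
    simp only [muFrom, List.zipIdx_cons, List.map_cons, List.prod_cons]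
    rw [show (List.zipIdx w (k + 1 + 1)) = List.zipIdx w (k + 1 + 1) from rfl]
    have h1 : ((List.zipIdx w (k + 1 + 1)).map (fun p => (μ p.1).map (shiftP p.2))).prod
        = muFrom μ (k + 1 + 1) w := rfl
    have h2 : ((List.zipIdx w (k + 1)).map (fun p => (μ p.1).map (shiftP p.2))).prod
        = muFrom μ (k + 1) w := rfl
    rw [h1, h2, ih (k+1), ih k, map_sRH_eq, map_sRH_eq, map_sRH_eq,
      _root_.map_mul sRH.mapMatrix ((μ a).map (shiftP k)) (sRH.mapMatrix (muFrom μ k w))]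
    congr 1
    ext i j
    simp [RingHom.mapMatrix_apply, Matrix.map_apply, sRH_apply, shiftP_shiftP]

lemma muWord_cons {S ι : Type*} [Fintype ι] [DecidableEq ι]
    (μ : S → Matrix ι ι (Polynomial ℚ)) (σ : S) (w : List S) :
    muWord μ (σ :: w) = μ σ * (muWord μ w).map (shiftP 1) := by
  rw [muWord_eq_muFrom]
  have : muFrom μ 0 (σ :: w) = (μ σ).map (shiftP 0) * muFrom μ 1 w := by
    simp only [muFrom, List.zipIdx_cons, List.map_cons, List.prod_cons]
  rw [this, muFrom_succ, muWord_eq_muFrom]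
  congr 1
  ext i j
  simp [Matrix.map_apply, shiftP_zero]

lemma map_mulVec {ι : Type*} [Fintype ι] (M : Matrix ι ι (Polynomial ℚ))
    (v : ι → Polynomial ℚ) (i : ι) :
    (M.map (shiftP 1)).mulVec (fun j => shiftP 1 (v j)) i = shiftP 1 (M.mulVec v i) := by
  simp only [Matrix.mulVec, dotProduct, Matrix.map_apply, ← sRH_apply,
    ← _root_.map_mul sRH, ← map_sum sRH]

lemma backF_cons {S ι : Type*} [Fintype ι] [DecidableEq ι]
    (μ : S → Matrix ι ι (Polynomial ℚ)) (β : ι → Polynomial ℚ) (σ : S) (w : List S) :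
    backF μ β (σ :: w) = (μ σ).mulVec (fun i => shiftP 1 (backF μ β w i)) := by
  unfold backF
  have hv : (fun j => shiftP ((σ :: w).length) (β j))
      = fun j => shiftP 1 (shiftP w.length (β j)) := by
    funext j
    rw [show ((σ :: w).length : ℕ) = w.length + 1 from rfl, shiftP_shiftP]
  have key : ((muWord μ w).map (shiftP 1)).mulVec (fun j => shiftP 1 (shiftP w.length (β j)))
      = fun i => shiftP 1 ((muWord μ w).mulVec (fun j => shiftP w.length (β j)) i) :=
    funext fun i => map_mulVec _ _ i
  rw [muWord_cons, ← Matrix.mulVec_mulVec, hv, key]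

/-- shift on RatFunc -/
noncomputable def shR : RatFunc ℚ →+* RatFunc ℚ :=
  IsFractionRing.lift (g := (algebraMap (Polynomial ℚ) (RatFunc ℚ)).comp sRH)
    (((IsFractionRing.injective (Polynomial ℚ) (RatFunc ℚ)).comp sRH_injective))

lemma shR_algebraMap (p : Polynomial ℚ) :
    shR (algebraMap (Polynomial ℚ) (RatFunc ℚ) p)
      = algebraMap (Polynomial ℚ) (RatFunc ℚ) (shiftP 1 p) := by
  rw [shR, IsFractionRing.lift_algebraMap]
  simp [sRH_apply]


set_option synthInstance.maxHeartbeats 1000000 in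
set_option maxHeartbeats 1000000 in
/-- Let `W` be a finite set of words containing `ε`.  If for every
letter `σ` and every `u ∈ W` the vector `B_A(σu)` lies in the `ℚ(x)`-linear span of
`{B_A(u') : u' ∈ W}` (inside `ℚ(x)^n`), then `B_A(w)` lies in that span for every
word `w`. -/
theorem backward_vectors_in_ratfunc_span
    {S : Type*} [Fintype S] (n : ℕ)
    (α : Fin n → ℚ) (μ : S → Matrix (Fin n) (Fin n) (Polynomial ℚ))
    (β : Fin n → Polynomial ℚ)
    (W : Finset (List S)) (hW : ([] : List S) ∈ W)
    (hclosed : ∀ (σ : S), ∀ u ∈ W,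
      embRat (backF μ β (σ :: u)) ∈
        Submodule.span (RatFunc ℚ)
          ((fun u' => embRat (backF μ β u')) '' (W : Set (List S)))) :
    ∀ w : List S,
      embRat (backF μ β w) ∈
        Submodule.span (RatFunc ℚ)
          ((fun u' => embRat (backF μ β u')) '' (W : Set (List S))) := by
  set s : Set (Fin n → RatFunc ℚ) :=
    ((fun u' => embRat (backF μ β u')) '' (W : Set (List S))) with hs
  set aM := algebraMap (Polynomial ℚ) (RatFunc ℚ) with haM
  intro w
  induction w with
  | nil => exact Submodule.subset_span ⟨[], hW, rfl⟩
  | cons σ w ih =>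
    -- the semilinear "prepend σ" map on ℚ(x)^n
    set T : (Fin n → RatFunc ℚ) → (Fin n → RatFunc ℚ) :=
      fun v => fun i => ∑ j, aM (μ σ i j) * shR (v j) with hTdef
    have hTemb : ∀ u : List S, T (embRat (backF μ β u)) = embRat (backF μ β (σ :: u)) := by
      intro u
      funext i
      simp only [hTdef, embRat, ← haM, shR_algebraMap, backF_cons, Matrix.mulVec,
        dotProduct]
      rw [map_sum]
      exact Finset.sum_congr rfl fun x _ => by rw [haM, shR_algebraMap, _root_.map_mul]
    have main : ∀ v ∈ Submodule.span (RatFunc ℚ) s, T v ∈ Submodule.span (RatFunc ℚ) s := by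
      intro v hv
      induction hv using Submodule.span_induction with
      | mem x hx =>
        obtain ⟨u, hu, rfl⟩ := hx
        rw [hTemb u]
        exact hclosed σ u hu
      | zero =>
        have : T 0 = 0 := by funext i; simp [hTdef]
        rw [this]; exact Submodule.zero_mem _
      | add x y hx hy ihx ihy =>
        have : T (x + y) = T x + T y := by
          funext i
          simp [hTdef, mul_add, Finset.sum_add_distrib]
        rw [this]; exact Submodule.add_mem _ ihx ihy
      | smul a x hx ihx =>
        have : T (a • x) = shR a • T x := by
          funext i
          simp [hTdef, Finset.mul_sum, _root_.map_mul, mul_left_comm]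
        rw [this]; exact Submodule.smul_mem _ _ ihx
    rw [← hTemb w]
    exact main _ ih
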